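/- In the case of the rooted binary tree (d = 2), the normalizer of the group SHAut({0,1}*) of spherically homogeneous automorphisms in Aut({0,1}*) is exactly the group Aff({0,1}*) of affine automorphisms. -/

import Mathlib

/-- `A` is an infinite upper triangular matrix over `ℤ/dℤ` with units on the diagonal,
i.e. `A ∈ U_∞ℤ_d`. -/
def IsUT (d : ℕ) (A : ℕ → ℕ → ZMod d) : Prop :=
  (∀ i j, j < i → A i j = 0) ∧ (∀ i, IsUnit (A i i))

/-- The affine transformation `π_{A,b} : ℤ_d^∞ → ℤ_d^∞`, `x ↦ b + x·A`. -/
def affMap (d : ℕ) (A : ℕ → ℕ → ZMod d) (b : ℕ → ZMod d)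
    (x : ℕ → ZMod d) : ℕ → ZMod d :=
  fun j => b j + ∑ i ∈ Finset.range (j + 1), x i * A i j

/-- `g` preserves agreement of initial segments: if two sequences agree in their first
`n` entries, then so do their images, for every `n`. -/
def Pres (d : ℕ) (g : (ℕ → ZMod d) → ℕ → ZMod d) : Prop :=
  ∀ (n : ℕ) (x y : ℕ → ZMod d), (∀ i < n, x i = y i) → ∀ i < n, g x i = g y i

/-- `SHAut({0,1}*)`: the set of spherically homogeneous automorphisms of the binary
tree, i.e. permutations of the boundary acting coordinatewise by a sequence of
permutations of `ℤ/2ℤ`. -/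
def SHSet : Set (Equiv.Perm (ℕ → ZMod 2)) :=
  {e | ∃ s : ℕ → Equiv.Perm (ZMod 2), ∀ x n, e x n = s n (x n)}

lemma z2_add_self : ∀ a : ZMod 2, a + a = 0 := by decide
lemma z2_eq_of_add_zero : ∀ a b : ZMod 2, a + b = 0 → a = b := by decide
lemma z2_cases : ∀ a : ZMod 2, a = 0 ∨ a = 1 := by decide
lemma z2_ring : ∀ a s t : ZMod 2, a + (s + t) = (a + s) + ((a + t) + a) := by decide
lemma z2_r2 : ∀ a b : ZMod 2, b = a + b + a := by decide
lemma z2_r3 : ∀ a b : ZMod 2, a + b + b = a := by decide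
lemma z2_r4 : ∀ a b : ZMod 2, b = a + (b + a) := by decide
lemma perm_z2 : ∀ (s : Equiv.Perm (ZMod 2)) (a : ZMod 2), s a = a + s 0 := by decide

/-- Membership in `SHSet` means being a translation. -/
lemma mem_SHSet_iff (e : Equiv.Perm (ℕ → ZMod 2)) :
    e ∈ SHSet ↔ ∃ c : ℕ → ZMod 2, ∀ x n, e x n = x n + c n := by
  constructor
  · rintro ⟨s, hs⟩
    exact ⟨fun n => s n 0, fun x n => by rw [hs]; exact perm_z2 (s n) (x n)⟩
  · rintro ⟨c, hc⟩
    exact ⟨fun n => Equiv.addRight (c n), fun x n => hc x n⟩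

/-- Translation by `c` as a permutation of the boundary. -/
def trP (c : ℕ → ZMod 2) : Equiv.Perm (ℕ → ZMod 2) := Equiv.addRight c

lemma trP_apply (c x : ℕ → ZMod 2) : trP c x = x + c := rfl

lemma trP_mem (c : ℕ → ZMod 2) : trP c ∈ SHSet :=
  (mem_SHSet_iff _).2 ⟨c, fun _ _ => rfl⟩

theorem stmt_14 (g : Equiv.Perm (ℕ → ZMod 2))
    (hg : Pres 2 g) (hg' : Pres 2 g.symm) :
    (fun f => g⁻¹ * f * g) '' SHSet = SHSet ↔
      ∃ A b, IsUT 2 A ∧ ∀ x, g x = affMap 2 A b x := by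
  constructor
  · -- forward direction
    intro himg
    -- KEY : g is affine-additive
    have key : ∀ c' x n, g (x + c') n = g x n + (g c' n + g 0 n) := by
      intro c'
      have hmem : trP c' ∈ (fun f => g⁻¹ * f * g) '' SHSet := by
        rw [himg]; exact trP_mem c'
      obtain ⟨f, hf, hconj⟩ := hmem
      obtain ⟨c, hc⟩ := (mem_SHSet_iff f).1 hf
      have hpt : ∀ x, g.symm (f (g x)) = x + c' := by
        intro x
        have := congrArg (fun e => e x) hconj
        simpa [trP_apply] using this
      have hfx : ∀ (y : ℕ → ZMod 2), f y = y + c := by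
        intro y; funext n; exact hc y n
      have hgx : ∀ x, g (x + c') = g x + c := by
        intro x
        have h1 : g.symm (g x + c) = x + c' := by rw [← hfx]; exact hpt x
        have := congrArg g h1
        rw [Equiv.apply_symm_apply] at this
        exact this.symm
      have hc0 : ∀ n, c n = g c' n + g 0 n := by
        intro n
        have h1 := congrFun (hgx 0) n
        simp only [zero_add] at h1
        have h2 : g c' n = g 0 n + c n := h1
        rw [h2]
        exact z2_r2 _ _
      intro x n
      have h3 := congrFun (hgx x) n
      rw [h3]
      show g x n + c n = _
      rw [hc0 n]
    -- define A, b
    set b : ℕ → ZMod 2 := g 0 with hb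
    set eb : ℕ → ℕ → ZMod 2 := fun i k => if k = i then 1 else 0 with heb
    set A : ℕ → ℕ → ZMod 2 := fun i j => g (eb i) j + g 0 j with hA
    -- off-diagonal zero
    have hoff : ∀ i j, j < i → g (eb i) j = g 0 j := by
      intro i j hji
      refine hg (j + 1) (eb i) 0 ?_ j (Nat.lt_succ_self j)
      intro k hk
      have hki : k ≠ i := by omega
      simp [heb, hki]
    have hUT1 : ∀ i j, j < i → A i j = 0 := by
      intro i j hji
      simp only [hA]
      rw [hoff i j hji]
      exact z2_add_self _
    -- diagonal is 1
    have hdiag : ∀ i, A i i = 1 := by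
      intro i
      rcases z2_cases (A i i) with h0 | h1
      · exfalso
        have hagree : ∀ j < i + 1, g (eb i) j = g 0 j := by
          intro j hj
          rcases Nat.lt_or_ge j i with hji | hji
          · exact hoff i j hji
          · have hji' : j = i := by omega
            subst hji'
            exact z2_eq_of_add_zero _ _ h0
        have hbad := hg' (i + 1) (g (eb i)) (g 0) hagree i (Nat.lt_succ_self i)
        rw [Equiv.symm_apply_apply, Equiv.symm_apply_apply] at hbad
        simp [heb] at hbad
      · exact h1
    refine ⟨A, b, ⟨hUT1, fun i => by rw [hdiag i]; exact isUnit_one⟩, ?_⟩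
    -- sum lemma
    have hsum : ∀ (s : Finset ℕ) (c : ℕ → ZMod 2) (j : ℕ),
        g (∑ i ∈ s, c i • eb i) j = g 0 j + ∑ i ∈ s, c i * A i j := by
      intro s c j
      induction s using Finset.induction with
      | empty => simp
      | insert _ _ hnotmem ih =>
        rename_i a s
        rw [Finset.sum_insert hnotmem, Finset.sum_insert hnotmem]
        have h1 : g (c a • eb a) j = g 0 j + c a * A a j := by
          rcases z2_cases (c a) with h | h <;> rw [h]
          · simp
          · simp only [one_smul, one_mul, hA]
            exact z2_r4 _ _
        rw [key (∑ i ∈ s, c i • eb i) (c a • eb a) j, h1, ih]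
        exact (z2_ring _ _ _).symm
    intro x
    funext j
    have hagree : ∀ k < j + 1, x k = (∑ i ∈ Finset.range (j + 1), x i • eb i) k := by
      intro k hk
      rw [Finset.sum_apply]
      simp only [Pi.smul_apply, heb, smul_eq_mul, mul_ite, mul_one, mul_zero]
      rw [Finset.sum_ite_eq (Finset.range (j + 1)) k x]
      simp [Finset.mem_range.mpr hk]
    have h2 := hg (j + 1) x (∑ i ∈ Finset.range (j + 1), x i • eb i) hagree j
      (Nat.lt_succ_self j)
    rw [h2, hsum (Finset.range (j + 1)) x j]
    rfl
  · -- backward direction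
    rintro ⟨A, b, ⟨hUT, hdiagU⟩, hAff⟩
    have g0 : ∀ j, g 0 j = b j := by
      intro j
      rw [hAff]
      simp [affMap]
    have key2 : ∀ x y (j : ℕ), g (x + y) j = g x j + (g y j + g 0 j) := by
      intro x y j
      rw [hAff, hAff, hAff, g0]
      simp only [affMap, Pi.add_apply, add_mul, Finset.sum_add_distrib]
      exact z2_ring _ _ _
    have keyfun : ∀ x c', g (x + c') = g x + (fun n => g c' n + g 0 n) := by
      intro x c'
      funext n
      exact key2 x c' n
    have hsurj : ∀ c : ℕ → ZMod 2, ∃ c', (fun n => g c' n + g 0 n) = c := by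
      intro c
      refine ⟨g.symm (c + g 0), ?_⟩
      funext n
      rw [Equiv.apply_symm_apply]
      show c n + g 0 n + g 0 n = c n
      exact z2_r3 _ _
    ext e
    simp only [Set.mem_image]
    constructor
    · rintro ⟨f, hf, rfl⟩
      obtain ⟨c, hc⟩ := (mem_SHSet_iff f).1 hf
      obtain ⟨c', hc'⟩ := hsurj c
      refine (mem_SHSet_iff _).2 ⟨c', fun x n => ?_⟩
      have hfx : f (g x) = g x + c := by funext m; exact hc (g x) m
      have hgc : g (x + c') = g x + c := by rw [keyfun x c', hc']
      show g.symm (f (g x)) n = x n + c' n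
      rw [hfx, ← hgc, Equiv.symm_apply_apply]
      rfl
    · intro he
      obtain ⟨c', hc'⟩ := (mem_SHSet_iff e).1 he
      refine ⟨trP (fun n => g c' n + g 0 n), trP_mem _, ?_⟩
      refine Equiv.ext fun x => ?_
      show g.symm (trP _ (g x)) = e x
      rw [trP_apply, ← keyfun x c', Equiv.symm_apply_apply]
      funext n
      exact (hc' x n).symm
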